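/- Let T ⊂ S be local orders in a simple Artinian ring Q with the same prime ideals. Then T is a right Mori order if and only if S is a right Mori order. -/

import Mathlib

/-! Basic notions for orders in a simple Artinian ring, following Halimi,
"Right Mori orders". Throughout, `Q` is a ring and `S` a subring of `Q`. -/

section Preamble

variable {Q : Type*} [Ring Q]

/-- `a` is a regular element of the subring `S` of `Q`, i.e. `a ∈ S` and `a` is
neither a left nor a right zero divisor in `S`. -/
def IsRegularElemIn (S : Subring Q) (a : Q) : Prop :=
  a ∈ S ∧ (∀ b ∈ S, a * b = 0 → b = 0) ∧ (∀ b ∈ S, b * a = 0 → b = 0)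

/-- `S` is an order in `Q`: every regular element of `S` is a unit of `Q` and every
element of `Q` is both a left fraction and a right fraction over `S`. -/
def IsOrderIn (S : Subring Q) : Prop :=
  (∀ a : Q, IsRegularElemIn S a → IsUnit a) ∧
  (∀ q : Q, ∃ a b : Q, a ∈ S ∧ IsRegularElemIn S b ∧ b * q = a) ∧
  (∀ q : Q, ∃ a b : Q, a ∈ S ∧ IsRegularElemIn S b ∧ q * b = a)

/-- A subset of `Q` that is a right `S`-submodule of `Q`. -/
def IsRightModSet (S : Subring Q) (I : Set Q) : Prop :=
  (0 : Q) ∈ I ∧ (∀ x ∈ I, ∀ y ∈ I, x + y ∈ I) ∧ (∀ x ∈ I, -x ∈ I) ∧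
    ∀ x ∈ I, ∀ s ∈ S, x * s ∈ I

/-- A subset of `Q` that is a left `S`-submodule of `Q`. -/
def IsLeftModSet (S : Subring Q) (I : Set Q) : Prop :=
  (0 : Q) ∈ I ∧ (∀ x ∈ I, ∀ y ∈ I, x + y ∈ I) ∧ (∀ x ∈ I, -x ∈ I) ∧
    ∀ x ∈ I, ∀ s ∈ S, s * x ∈ I

/-- A (integral) right ideal of `S`, viewed as a subset of `Q`. -/
def IsRightIdealSet (S : Subring Q) (I : Set Q) : Prop :=
  IsRightModSet S I ∧ I ⊆ (S : Set Q)

/-- A (integral) left ideal of `S`, viewed as a subset of `Q`. -/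
def IsLeftIdealSet (S : Subring Q) (I : Set Q) : Prop :=
  IsLeftModSet S I ∧ I ⊆ (S : Set Q)

/-- `(A : B)_r = {q ∈ Q : B q ⊆ A}`. -/
def colonR (A B : Set Q) : Set Q := {q : Q | ∀ b ∈ B, b * q ∈ A}

/-- `(A : B)_l = {q ∈ Q : q B ⊆ A}`. -/
def colonL (A B : Set Q) : Set Q := {q : Q | ∀ b ∈ B, q * b ∈ A}

/-- `I^ν = (S : (S : I)_l)_r`. -/
def nuR (S : Subring Q) (I : Set Q) : Set Q := colonR (S : Set Q) (colonL (S : Set Q) I)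

/-- `^ν I = (S : (S : I)_r)_l`. -/
def nuL (S : Subring Q) (I : Set Q) : Set Q := colonL (S : Set Q) (colonR (S : Set Q) I)

/-- A (fractional) right `S`-ideal: a right `S`-submodule of `Q` containing a regular
element of `S` and with `uI ⊆ S` for some unit `u` of `Q`. -/
def IsRightSIdeal (S : Subring Q) (I : Set Q) : Prop :=
  IsRightModSet S I ∧ (∃ a ∈ I, IsRegularElemIn S a) ∧
    ∃ u : Qˣ, ∀ x ∈ I, (u : Q) * x ∈ S

/-- A (fractional) left `S`-ideal. -/
def IsLeftSIdeal (S : Subring Q) (I : Set Q) : Prop :=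
  IsLeftModSet S I ∧ (∃ a ∈ I, IsRegularElemIn S a) ∧
    ∃ u : Qˣ, ∀ x ∈ I, x * (u : Q) ∈ S

/-- A completely prime right ideal of `S`: a proper right ideal `P` such that for all
`a, b ∈ S`, `aP ⊆ P` and `ab ∈ P` imply `a ∈ P` or `b ∈ P`. -/
def IsCompletelyPrimeRightIdeal (S : Subring Q) (P : Set Q) : Prop :=
  IsRightIdealSet S P ∧ P ≠ (S : Set Q) ∧
    ∀ a ∈ S, ∀ b ∈ S, (∀ p ∈ P, a * p ∈ P) → a * b ∈ P → a ∈ P ∨ b ∈ P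

/-- The right `S`-submodule of `Q` generated by a set `G`. -/
def rightSpan (S : Subring Q) (G : Set Q) : Set Q :=
  ⋂₀ {J : Set Q | IsRightModSet S J ∧ G ⊆ J}

/-- The left `S`-submodule of `Q` generated by a set `G`. -/
def leftSpan (S : Subring Q) (G : Set Q) : Set Q :=
  ⋂₀ {J : Set Q | IsLeftModSet S J ∧ G ⊆ J}

/-- `I` is a finitely generated right `S`-submodule of `Q`. -/
def IsFGRightModSet (S : Subring Q) (I : Set Q) : Prop :=
  ∃ G : Finset Q, I = rightSpan S ↑G

/-- The ascending chain condition on regular integral right divisorial ideals of `S`. -/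
def ACCRightDivisorial (S : Subring Q) : Prop :=
  ∀ f : ℕ → Set Q,
    (∀ n, IsRightIdealSet S (f n) ∧ (∃ a ∈ f n, IsRegularElemIn S a) ∧ nuR S (f n) = f n) →
    (∀ n, f n ⊆ f (n + 1)) → ∃ N, ∀ n, N ≤ n → f n = f N

/-- The ascending chain condition on regular integral left divisorial ideals of `S`. -/
def ACCLeftDivisorial (S : Subring Q) : Prop :=
  ∀ f : ℕ → Set Q,
    (∀ n, IsLeftIdealSet S (f n) ∧ (∃ a ∈ f n, IsRegularElemIn S a) ∧ nuL S (f n) = f n) →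
    (∀ n, f n ⊆ f (n + 1)) → ∃ N, ∀ n, N ≤ n → f n = f N

/-- A right Mori order: an order satisfying the ACC on regular integral right
divisorial ideals. -/
def IsRightMori (S : Subring Q) : Prop := IsOrderIn S ∧ ACCRightDivisorial S

/-- The principal right ideal `aS` of `S`, as a subset of `Q`. -/
def principalRight (S : Subring Q) (a : Q) : Set Q := {x : Q | ∃ s ∈ S, x = a * s}

/-- The principal left ideal `Sa` of `S`, as a subset of `Q`. -/
def principalLeft (S : Subring Q) (a : Q) : Set Q := {x : Q | ∃ s ∈ S, x = s * a}

/-- A two-sided (integral) ideal of `S`, as a subset of `Q`. -/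
def IsTwoSidedIdealSet (S : Subring Q) (I : Set Q) : Prop :=
  IsRightModSet S I ∧ IsLeftModSet S I ∧ I ⊆ (S : Set Q)

/-- A maximal (proper) right ideal of `S`. -/
def IsMaxRightIdeal (S : Subring Q) (M : Set Q) : Prop :=
  IsRightIdealSet S M ∧ M ≠ (S : Set Q) ∧
    ∀ N, IsRightIdealSet S N → N ≠ (S : Set Q) → M ⊆ N → N = M

/-- A maximal (proper) left ideal of `S`. -/
def IsMaxLeftIdeal (S : Subring Q) (M : Set Q) : Prop :=
  IsLeftIdealSet S M ∧ M ≠ (S : Set Q) ∧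
    ∀ N, IsLeftIdealSet S N → N ≠ (S : Set Q) → M ⊆ N → N = M

/-- `S` is local with (Jacobson radical) `M`: `M` is a two-sided ideal which is the
only maximal right ideal and the only maximal left ideal of `S`. -/
def IsLocalWithMax (S : Subring Q) (M : Set Q) : Prop :=
  IsTwoSidedIdealSet S M ∧
    IsMaxRightIdeal S M ∧ (∀ N, IsMaxRightIdeal S N → N = M) ∧
    IsMaxLeftIdeal S M ∧ (∀ N, IsMaxLeftIdeal S N → N = M)

/-- A local order. -/
def IsLocalOrder (S : Subring Q) : Prop := IsOrderIn S ∧ ∃ M : Set Q, IsLocalWithMax S M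

/-- The additive span of the set of products `a * b` with `a ∈ A`, `b ∈ B`. -/
def mulSpan (A B : Set Q) : Set Q :=
  (AddSubgroup.closure {x : Q | ∃ a ∈ A, ∃ b ∈ B, x = a * b} : AddSubgroup Q)

/-- Powers `M^n` of an ideal `M` of `S` (with `M^0 = S`). -/
def idealPow (S : Subring Q) (M : Set Q) : ℕ → Set Q
  | 0 => (S : Set Q)
  | n + 1 => mulSpan M (idealPow S M n)

/-- A right `τ`-ideal of `S`: a right ideal `J` such that `F^ν ⊆ J` for every finitely
generated right ideal `F ⊆ J`. -/
def IsRightTauIdeal (S : Subring Q) (J : Set Q) : Prop :=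
  IsRightIdealSet S J ∧
    ∀ F : Set Q, IsRightIdealSet S F → IsFGRightModSet S F → F ⊆ J → nuR S F ⊆ J

/-- A maximal (proper) right `τ`-ideal of `S`. -/
def IsMaxRightTauIdeal (S : Subring Q) (M : Set Q) : Prop :=
  IsRightTauIdeal S M ∧ M ≠ (S : Set Q) ∧
    ∀ N, IsRightTauIdeal S N → N ≠ (S : Set Q) → M ⊆ N → N = M

/-- A prime (two-sided) ideal of the order `S`. -/
def IsPrimeIdealSet (S : Subring Q) (P : Set Q) : Prop :=
  IsTwoSidedIdealSet S P ∧ P ≠ (S : Set Q) ∧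
    ∀ a ∈ S, ∀ b ∈ S, (∀ s ∈ S, a * s * b ∈ P) → a ∈ P ∨ b ∈ P

/-- A divisorial two-sided (integral) ideal of `S`: `I = I^ν = ^ν I`. -/
def IsDivisorialIdealSet (S : Subring Q) (I : Set Q) : Prop :=
  IsTwoSidedIdealSet S I ∧ nuR S I = I ∧ nuL S I = I

/-- `D_m(S)`: the set of maximal divisorial (two-sided, integral) ideals of `S`. -/
def maxDivisorialIdeals (S : Subring Q) : Set (Set Q) :=
  {P | IsDivisorialIdealSet S P ∧ P ≠ (S : Set Q) ∧
    ∀ J, IsDivisorialIdealSet S J → J ≠ (S : Set Q) → P ⊆ J → J = P}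

/-- `c` is regular modulo the ideal `P` of `S`. -/
def IsRegularModP (S : Subring Q) (P : Set Q) (c : Q) : Prop :=
  c ∈ S ∧ (∀ b ∈ S, c * b ∈ P → b ∈ P) ∧ (∀ b ∈ S, b * c ∈ P → b ∈ P)

/-- The left order `O_l(M) = {q ∈ Q : qM ⊆ M}` of `M`. -/
def leftOrderOf (M : Set Q) : Set Q := {q : Q | ∀ m ∈ M, q * m ∈ M}

/-- `s` is a unit of the subring `R` of `Q`. -/
def IsUnitIn (R : Subring Q) (s : Q) : Prop :=
  s ∈ R ∧ ∃ t ∈ R, s * t = 1 ∧ t * s = 1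

/-- A family of overrings `S = ⋂ᵢ Sᵢ` is of finite character if every nonzero
non-unit of `S` is a non-unit of only finitely many `Sᵢ`. -/
def FiniteCharacter {α : Type*} (S : Subring Q) (F : α → Subring Q) : Prop :=
  ∀ s ∈ S, s ≠ 0 → ¬IsUnitIn S s → {i : α | ¬IsUnitIn (F i) s}.Finite

/-- `S` is right pseudo-coherent: any (nonempty) finite intersection of principal
right ideals of `S` is a finitely generated right ideal. -/
def RightPseudoCoherent (S : Subring Q) : Prop :=
  ∀ F : Finset Q, ↑F ⊆ (S : Set Q) → F.Nonempty →
    IsFGRightModSet S (⋂ a ∈ F, principalRight S a)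

/-- `A :_r x = {s ∈ S : x s ∈ A}`. -/
def colonByElemR (S : Subring Q) (A : Set Q) (x : Q) : Set Q :=
  {s : Q | s ∈ S ∧ x * s ∈ A}

/-- A `ν`-irreducible right ideal: a right divisorial right ideal which is not the
intersection of two right divisorial right ideals properly containing it. -/
def IsNuIrreducible (S : Subring Q) (I : Set Q) : Prop :=
  IsRightIdealSet S I ∧ nuR S I = I ∧
    ¬∃ A B : Set Q, (IsRightIdealSet S A ∧ nuR S A = A) ∧
      (IsRightIdealSet S B ∧ nuR S B = B) ∧ I ⊂ A ∧ I ⊂ B ∧ I = A ∩ B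

/-- A non-commutative (rank one) discrete valuation ring inside `Q`. -/
def IsNCDVR (R : Subring Q) : Prop :=
  IsOrderIn R ∧ ∃ M : Set Q, IsLocalWithMax R M ∧ M ≠ ({0} : Set Q) ∧
    (∃ p : Q, IsRegularElemIn R p ∧ M = principalRight R p ∧ M = principalLeft R p) ∧
    (⋂ n : ℕ, idealPow R M n) = ({0} : Set Q)

/-- A Krull order in the sense of Marubayashi. -/
def IsKrullOrder (S : Subring Q) : Prop :=
  ∃ (A : Set (Subring Q)) (B : Finset (Subring Q)),
    (∀ R ∈ A, (S : Set Q) ⊆ ↑R ∧ IsNCDVR R) ∧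
    (∀ T ∈ B, (S : Set Q) ⊆ ↑T ∧ IsSimpleRing T ∧ IsNoetherianRing T) ∧
    ((S : Set Q) = (⋂ R ∈ A, (R : Set Q)) ∩ ⋂ T ∈ B, (T : Set Q)) ∧
    ∀ c : Q, IsRegularElemIn S c →
      {R ∈ A | principalRight R c ≠ (R : Set Q)}.Finite ∧
      {R ∈ A | principalLeft R c ≠ (R : Set Q)}.Finite

end Preamble

section HalimiAux

namespace HalimiAux

variable {Q : Type*} [Ring Q]

/-- The set `u • A = {u * a : a ∈ A}`. -/
def uSet (u : Q) (A : Set Q) : Set Q := {x : Q | ∃ a ∈ A, x = u * a}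

theorem mem_uSet {u : Qˣ} {A : Set Q} {x : Q} :
    x ∈ uSet (u : Q) A ↔ ((u⁻¹ : Qˣ) : Q) * x ∈ A := by
  constructor
  · rintro ⟨a, ha, rfl⟩; rwa [Units.inv_mul_cancel_left]
  · intro h; exact ⟨((u⁻¹ : Qˣ) : Q) * x, h, (Units.mul_inv_cancel_left u x).symm⟩

theorem uSet_isRightMod (R : Subring Q) (u : Q) {A : Set Q} (hA : IsRightModSet R A) :
    IsRightModSet R (uSet u A) := by
  obtain ⟨h0, hadd, hneg, hsmul⟩ := hA
  refine ⟨⟨0, h0, (mul_zero u).symm⟩, ?_, ?_, ?_⟩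
  · rintro _ ⟨a, ha, rfl⟩ _ ⟨b, hb, rfl⟩; exact ⟨a + b, hadd a ha b hb, (mul_add u a b).symm⟩
  · rintro _ ⟨a, ha, rfl⟩; exact ⟨-a, hneg a ha, (mul_neg u a).symm⟩
  · rintro _ ⟨a, ha, rfl⟩ s hs; exact ⟨a * s, hsmul a ha s hs, mul_assoc u a s⟩

theorem coe_isRightMod (R : Subring Q) : IsRightModSet R (R : Set Q) :=
  ⟨R.zero_mem, fun x hx y hy => R.add_mem hx hy, fun x hx => R.neg_mem hx,
    fun x hx s hs => R.mul_mem hx hs⟩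

theorem eq_coe_of_one_mem {R : Subring Q} {N : Set Q} (hN : IsRightModSet R N)
    (hNR : N ⊆ (R : Set Q)) (h1 : (1 : Q) ∈ N) : N = (R : Set Q) := by
  refine subset_antisymm hNR fun r hr => ?_
  simpa using hN.2.2.2 1 h1 r hr

theorem mem_colonL {A B : Set Q} {q : Q} : q ∈ colonL A B ↔ ∀ b ∈ B, q * b ∈ A := Iff.rfl

theorem mem_colonR {A B : Set Q} {q : Q} : q ∈ colonR A B ↔ ∀ b ∈ B, b * q ∈ A := Iff.rfl

theorem mem_nuR {R : Subring Q} {A : Set Q} {q : Q} :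
    q ∈ nuR R A ↔ ∀ b ∈ colonL (R : Set Q) A, b * q ∈ (R : Set Q) := Iff.rfl

theorem colonR_isRightMod (R : Subring Q) (X : Set Q) :
    IsRightModSet R (colonR (R : Set Q) X) := by
  refine ⟨?_, ?_, ?_, ?_⟩
  · intro b hb; rw [mul_zero]; exact R.zero_mem
  · intro x hx y hy b hb; rw [mul_add]; exact R.add_mem (hx b hb) (hy b hb)
  · intro x hx b hb; rw [mul_neg]; exact R.neg_mem (hx b hb)
  · intro x hx s hs b hb; rw [← mul_assoc]; exact R.mul_mem (hx b hb) hs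

theorem subset_nuR (R : Subring Q) (A : Set Q) : A ⊆ nuR R A :=
  fun a ha l hl => hl a ha

theorem nuR_mono (R : Subring Q) {A B : Set Q} (h : A ⊆ B) : nuR R A ⊆ nuR R B :=
  fun q hq l hl => hq l (fun a ha => hl a (h ha))

theorem nuR_subset (R : Subring Q) {A : Set Q} (hA : A ⊆ (R : Set Q)) :
    nuR R A ⊆ (R : Set Q) := by
  intro q hq
  have h1 : (1 : Q) ∈ colonL (R : Set Q) A := by
    intro a ha; rw [one_mul]; exact hA ha
  simpa using hq 1 h1

theorem nuR_idem (R : Subring Q) (A : Set Q) : nuR R (nuR R A) = nuR R A := by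
  have key : colonL (R : Set Q) (colonR (R : Set Q) (colonL (R : Set Q) A))
      = colonL (R : Set Q) A := by
    apply subset_antisymm
    · intro l hl a ha; exact hl a (subset_nuR R A ha)
    · intro l hl b hb; exact hb l hl
  unfold nuR
  rw [key]

theorem nuR_coe (R : Subring Q) : nuR R (R : Set Q) = (R : Set Q) :=
  subset_antisymm (nuR_subset R subset_rfl) (subset_nuR R _)

theorem colonL_uSet (R : Subring Q) (u : Qˣ) (A : Set Q) :
    colonL (R : Set Q) (uSet (u : Q) A) = {z : Q | z * (u : Q) ∈ colonL (R : Set Q) A} := by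
  ext z
  constructor
  · intro hz a ha
    have := hz ((u : Q) * a) ⟨a, ha, rfl⟩
    rwa [← mul_assoc] at this
  · rintro hz _ ⟨a, ha, rfl⟩
    rw [← mul_assoc]
    exact hz a ha

theorem colonR_comp (R : Subring Q) (u : Qˣ) (X : Set Q) :
    colonR (R : Set Q) {z : Q | z * (u : Q) ∈ X} = uSet (u : Q) (colonR (R : Set Q) X) := by
  ext x
  constructor
  · intro hx
    refine ⟨((u⁻¹ : Qˣ) : Q) * x, fun b hb => ?_, (Units.mul_inv_cancel_left u x).symm⟩
    have hb' : (b * ((u⁻¹ : Qˣ) : Q)) * (u : Q) ∈ X := by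
      rwa [Units.inv_mul_cancel_right]
    have h2 := hx (b * ((u⁻¹ : Qˣ) : Q)) hb'
    rwa [mul_assoc] at h2
  · rintro ⟨d, hd, rfl⟩ z hz
    rw [← mul_assoc]
    exact hd (z * (u : Q)) hz

theorem nuR_uSet (R : Subring Q) (u : Qˣ) (A : Set Q) :
    nuR R (uSet (u : Q) A) = uSet (u : Q) (nuR R A) := by
  unfold nuR
  rw [colonL_uSet, colonR_comp]

theorem nuR_principal (R : Subring Q) (u : Qˣ) :
    nuR R (uSet (u : Q) (R : Set Q)) = uSet (u : Q) (R : Set Q) := by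
  rw [nuR_uSet, nuR_coe]

theorem subset_rightSpan (R : Subring Q) (A : Set Q) : A ⊆ rightSpan R A := by
  intro a ha
  exact Set.mem_sInter.mpr fun J hJ => hJ.2 ha

theorem rightSpan_subset (R : Subring Q) {A J : Set Q} (hJ : IsRightModSet R J)
    (hAJ : A ⊆ J) : rightSpan R A ⊆ J :=
  Set.sInter_subset_of_mem ⟨hJ, hAJ⟩

theorem rightSpan_eq_self (R : Subring Q) {A : Set Q} (hA : IsRightModSet R A) :
    rightSpan R A = A :=
  subset_antisymm (rightSpan_subset R hA subset_rfl) (subset_rightSpan R A)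

theorem rightSpan_mono (R : Subring Q) {A B : Set Q} (h : A ⊆ B) :
    rightSpan R A ⊆ rightSpan R B := by
  intro x hx
  refine Set.mem_sInter.mpr fun J hJ => ?_
  exact Set.mem_sInter.mp hx J ⟨hJ.1, h.trans hJ.2⟩

theorem rightSpan_isRightMod (R : Subring Q) (A : Set Q) :
    IsRightModSet R (rightSpan R A) := by
  refine ⟨?_, ?_, ?_, ?_⟩
  · exact Set.mem_sInter.mpr fun J hJ => hJ.1.1
  · intro x hx y hy
    exact Set.mem_sInter.mpr fun J hJ =>
      hJ.1.2.1 x (Set.mem_sInter.mp hx J hJ) y (Set.mem_sInter.mp hy J hJ)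
  · intro x hx
    exact Set.mem_sInter.mpr fun J hJ => hJ.1.2.2.1 x (Set.mem_sInter.mp hx J hJ)
  · intro x hx s hs
    exact Set.mem_sInter.mpr fun J hJ => hJ.1.2.2.2 x (Set.mem_sInter.mp hx J hJ) s hs

/-- Dedekind-finiteness of an Artinian ring. -/
theorem artinian_mul_eq_one_comm [IsArtinianRing Q] {a b : Q} (h : a * b = 1) :
    b * a = 1 := by
  have hpow : ∀ n : ℕ, a ^ n * b ^ n = 1 := by
    intro n
    induction n with
    | zero => simp
    | succ n ih =>
      rw [pow_succ' a n, pow_succ b n, mul_assoc, ← mul_assoc (a ^ n), ih, one_mul, h]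
  let F : ℕ →o (Submodule Q Q)ᵒᵈ :=
    ⟨fun n => OrderDual.toDual (Submodule.span Q {a ^ n}), by
      intro m n hmn
      simp only [OrderDual.toDual_le_toDual]
      rw [Submodule.span_le, Set.singleton_subset_iff]
      exact Submodule.mem_span_singleton.mpr
        ⟨a ^ (n - m), by rw [smul_eq_mul, ← pow_add, Nat.sub_add_cancel hmn]⟩⟩
  obtain ⟨n, hn⟩ := IsArtinian.monotone_stabilizes F
  have hspan : Submodule.span Q {a ^ n} = Submodule.span Q {a ^ (n + 1)} :=
    hn (n + 1) (Nat.le_succ n)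
  have hmem : a ^ n ∈ Submodule.span Q {a ^ (n + 1)} := by
    rw [← hspan]; exact Submodule.mem_span_singleton_self _
  obtain ⟨x, hx⟩ := Submodule.mem_span_singleton.mp hmem
  rw [smul_eq_mul] at hx
  have h1 : x * a = 1 := by
    calc x * a = x * a * (a ^ n * b ^ n) := by rw [hpow n, mul_one]
    _ = x * a ^ (n + 1) * b ^ n := by rw [pow_succ']; simp only [mul_assoc]
    _ = a ^ n * b ^ n := by rw [hx]
    _ = 1 := hpow n
  have hb : b = x := by
    calc b = 1 * b := (one_mul b).symm
    _ = x * a * b := by rw [h1]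
    _ = x * (a * b) := mul_assoc _ _ _
    _ = x := by rw [h, mul_one]
  rw [hb]; exact h1

section LocalFacts

variable {R : Subring Q} {M : Set Q}

theorem M_ne_coe (h : IsLocalWithMax R M) : M ≠ (R : Set Q) := h.2.1.2.1

theorem one_not_mem (h : IsLocalWithMax R M) : (1 : Q) ∉ M :=
  fun h1 => M_ne_coe h (eq_coe_of_one_mem h.1.1 h.1.2.2 h1)

theorem subset_M (hloc : IsLocalWithMax R M) {N : Set Q} (hN : IsRightModSet R N)
    (hNR : N ⊆ (R : Set Q)) (h1 : (1 : Q) ∉ N) : N ⊆ M := by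
  set C : Set (Set Q) :=
    {J | IsRightModSet R J ∧ J ⊆ (R : Set Q) ∧ (1 : Q) ∉ J ∧ N ⊆ J} with hC
  have hub : ∀ c ⊆ C, IsChain (· ⊆ ·) c → c.Nonempty →
      ∃ ub ∈ C, ∀ s ∈ c, s ⊆ ub := by
    rintro c hcC hchain ⟨J₀, hJ₀⟩
    refine ⟨⋃₀ c, ⟨⟨?_, ?_, ?_, ?_⟩, ?_, ?_, ?_⟩, fun s hs => Set.subset_sUnion_of_mem hs⟩
    · exact ⟨J₀, hJ₀, (hcC hJ₀).1.1⟩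
    · rintro x ⟨J₁, hJ₁, hx⟩ y ⟨J₂, hJ₂, hy⟩
      rcases eq_or_ne J₁ J₂ with rfl | hne'
      · exact ⟨J₁, hJ₁, (hcC hJ₁).1.2.1 x hx y hy⟩
      · rcases hchain hJ₁ hJ₂ hne' with h | h
        · exact ⟨J₂, hJ₂, (hcC hJ₂).1.2.1 x (h hx) y hy⟩
        · exact ⟨J₁, hJ₁, (hcC hJ₁).1.2.1 x hx y (h hy)⟩
    · rintro x ⟨J₁, hJ₁, hx⟩; exact ⟨J₁, hJ₁, (hcC hJ₁).1.2.2.1 x hx⟩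
    · rintro x ⟨J₁, hJ₁, hx⟩ s hs; exact ⟨J₁, hJ₁, (hcC hJ₁).1.2.2.2 x hx s hs⟩
    · rintro x ⟨J₁, hJ₁, hx⟩; exact (hcC hJ₁).2.1 hx
    · rintro ⟨J₁, hJ₁, hx⟩; exact (hcC hJ₁).2.2.1 hx
    · exact (hcC hJ₀).2.2.2.trans (Set.subset_sUnion_of_mem hJ₀)
  obtain ⟨m, hNm, hmMax⟩ := zorn_subset_nonempty C hub N ⟨hN, hNR, h1, subset_rfl⟩
  have hmC := hmMax.prop
  have hmax : IsMaxRightIdeal R m := by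
    refine ⟨⟨hmC.1, hmC.2.1⟩, ?_, ?_⟩
    · intro h; exact hmC.2.2.1 (by rw [h]; exact R.one_mem)
    · intro N' hN' hN'ne hmN'
      have h1N' : (1 : Q) ∉ N' := fun hh => hN'ne (eq_coe_of_one_mem hN'.1 hN'.2 hh)
      have hN'C : N' ∈ C := ⟨hN'.1, hN'.2, h1N', hNm.trans hmN'⟩
      exact subset_antisymm (hmMax.2 hN'C hmN') hmN'
  have hmM : m = M := hloc.2.2.1 m hmax
  rw [← hmM]; exact hNm

theorem isUnitIn_of_not_mem (hloc : IsLocalWithMax R M) {x : Q} (hx : x ∈ (R : Set Q))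
    (hxM : x ∉ M) : IsUnitIn R x := by
  have key : ∀ y : Q, y ∈ (R : Set Q) → y ∉ M → ∃ z ∈ (R : Set Q), y * z = 1 := by
    intro y hy hyM
    have hN : IsRightModSet R (uSet y (R : Set Q)) := uSet_isRightMod R y (coe_isRightMod R)
    have hNR : uSet y (R : Set Q) ⊆ (R : Set Q) := by
      rintro _ ⟨s, hs, rfl⟩; exact R.mul_mem hy hs
    have h1 : (1 : Q) ∈ uSet y (R : Set Q) := by
      by_contra h1
      exact hyM (subset_M hloc hN hNR h1 ⟨1, R.one_mem, (mul_one y).symm⟩)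
    obtain ⟨z, hzR, hz⟩ := h1
    exact ⟨z, hzR, hz.symm⟩
  obtain ⟨y, hyR, hxy⟩ := key x hx hxM
  have hyM : y ∉ M := by
    intro hyM
    have h1M : (1 : Q) ∈ M := by
      rw [← hxy]; exact hloc.1.2.1.2.2.2 y hyM x hx
    exact one_not_mem hloc h1M
  obtain ⟨z, hzR, hyz⟩ := key y hyR hyM
  have hxz : x = z := by
    calc x = x * (y * z) := by rw [hyz, mul_one]
    _ = x * y * z := (mul_assoc _ _ _).symm
    _ = z := by rw [hxy, one_mul]
  exact ⟨hx, y, hyR, hxy, by rw [hxz]; exact hyz⟩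

theorem not_mem_M_of_unit (hloc : IsLocalWithMax R M) {x : Q} (h : IsUnitIn R x) :
    x ∉ M := by
  intro hx
  obtain ⟨hxR, t, htR, h1, h2⟩ := h
  have h1M : (1 : Q) ∈ M := by
    rw [← h2]; exact hloc.1.2.1.2.2.2 x hx t htR
  exact one_not_mem hloc h1M

theorem rightMod_dichotomy (hloc : IsLocalWithMax R M) {N : Set Q}
    (hN : IsRightModSet R N) (hNR : N ⊆ (R : Set Q)) : N ⊆ M ∨ N = (R : Set Q) := by
  by_cases h : N ⊆ M
  · exact Or.inl h
  right
  obtain ⟨x, hxN, hxM⟩ := Set.not_subset.mp h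
  obtain ⟨_, y, hyR, h1, h2⟩ := isUnitIn_of_not_mem hloc (hNR hxN) hxM
  apply eq_coe_of_one_mem hN hNR
  rw [← h1]
  exact hN.2.2.2 x hxN y hyR

theorem prime_M (hloc : IsLocalWithMax R M) : IsPrimeIdealSet R M := by
  refine ⟨hloc.1, M_ne_coe hloc, ?_⟩
  intro a ha b hb h
  by_cases haM : a ∈ M
  · exact Or.inl haM
  right
  obtain ⟨_, y, hyR, hay, hya⟩ := isUnitIn_of_not_mem hloc ha haM
  have := h y hyR
  rwa [hay, one_mul] at this

end LocalFacts

theorem regular_of_unit (R : Subring Q) {a : Q} (ha : a ∈ R) (hu : IsUnit a) :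
    IsRegularElemIn R a := by
  obtain ⟨v, rfl⟩ := hu
  refine ⟨ha, ?_, ?_⟩
  · intro b _ h
    calc b = ((v⁻¹ : Qˣ) : Q) * ((v : Q) * b) := (Units.inv_mul_cancel_left v b).symm
    _ = 0 := by rw [h, mul_zero]
  · intro b _ h
    calc b = b * (v : Q) * ((v⁻¹ : Qˣ) : Q) := (Units.mul_inv_cancel_right b v).symm
    _ = 0 := by rw [h, zero_mul]

theorem isUnit_of_regular {R : Subring Q} (horder : IsOrderIn R) {a : Q}
    (h : IsRegularElemIn R a) : IsUnit a := horder.1 a h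

/-- A monotone chain of sets with finite tail range stabilizes. -/
theorem stabilize {f : ℕ → Set Q} (hmono : ∀ n, f n ⊆ f (n + 1)) {N : ℕ}
    (hfin : {A : Set Q | ∃ n, N ≤ n ∧ f n = A}.Finite) :
    ∃ N', ∀ n, N' ≤ n → f n = f N' := by
  have hm : Monotone f := monotone_nat_of_le_succ hmono
  obtain ⟨A, hAmem, hmax⟩ : ∃ A ∈ {A : Set Q | ∃ n, N ≤ n ∧ f n = A},
      ∀ A' ∈ {A : Set Q | ∃ n, N ≤ n ∧ f n = A}, id A ≤ id A' → id A = id A' := by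
    obtain ⟨A, hA⟩ := Set.Finite.exists_maximal hfin ⟨f N, N, le_rfl, rfl⟩
    exact ⟨A, hA.1, fun A' hA' hle => le_antisymm hle (hA.2 hA' hle)⟩
  obtain ⟨n₀, hn₀, hA⟩ := hAmem
  refine ⟨n₀, fun n hn => ?_⟩
  have h1 := hmax (f n) ⟨n, hn₀.trans hn, rfl⟩ (by rw [← hA]; exact hm hn)
  rw [← hA] at h1
  exact h1.symm

end HalimiAux

end HalimiAux

section HalimiMain

namespace HalimiAux

variable {Q : Type*} [Ring Q] [IsArtinianRing Q]
variable {T S : Subring Q} {M : Set Q}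

theorem principal_of_colon {R : Subring Q} (hloc : IsLocalWithMax R M) {I : Set Q}
    (hI : IsRightModSet R I) {l : Q} (hl : ∀ i ∈ I, l * i ∈ (R : Set Q))
    (hlM : ¬ ∀ i ∈ I, l * i ∈ M) :
    ∃ u : Qˣ, (u : Q) ∈ I ∧ I = uSet (u : Q) (R : Set Q) := by
  have hN : IsRightModSet R (uSet l I) := uSet_isRightMod R l hI
  have hNR : uSet l I ⊆ (R : Set Q) := by rintro _ ⟨i, hi, rfl⟩; exact hl i hi
  have h1 : (1 : Q) ∈ uSet l I := by
    by_contra h1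
    exact hlM fun i hi => subset_M hloc hN hNR h1 ⟨i, hi, rfl⟩
  obtain ⟨i₀, hi₀, hei⟩ := h1
  have hli : l * i₀ = 1 := hei.symm
  have hil : i₀ * l = 1 := artinian_mul_eq_one_comm hli
  refine ⟨⟨i₀, l, hil, hli⟩, hi₀, subset_antisymm ?_ ?_⟩
  · intro x hx
    refine ⟨l * x, hl x hx, ?_⟩
    show x = i₀ * (l * x)
    rw [← mul_assoc, hil, one_mul]
  · rintro _ ⟨t, ht, rfl⟩
    show i₀ * t ∈ I
    exact hI.2.2.2 i₀ hi₀ t ht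

theorem colonL_coe_ST (hTloc : IsLocalWithMax T M) (hSloc : IsLocalWithMax S M)
    (hne : ¬ (S : Set Q) ⊆ (T : Set Q)) :
    colonL (T : Set Q) (S : Set Q) = M := by
  apply subset_antisymm
  · intro q hq
    have hqT : q ∈ (T : Set Q) := by simpa using hq 1 S.one_mem
    by_contra hqM
    obtain ⟨_, y, hyT, h1, h2⟩ := isUnitIn_of_not_mem hTloc hqT hqM
    apply hne
    intro s hs
    have h3 : q * s ∈ (T : Set Q) := hq s hs
    have h4 := T.mul_mem hyT h3
    rwa [← mul_assoc, h2, one_mul] at h4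
  · intro m hm
    exact fun s hs => hTloc.1.2.2 (hSloc.1.1.2.2.2 m hm s hs)

theorem classifyT (hTloc : IsLocalWithMax T M) (hSloc : IsLocalWithMax S M)
    (hsub : (T : Set Q) ⊆ (S : Set Q)) {I : Set Q}
    (hI : IsRightModSet T I) (hIT : I ⊆ (T : Set Q)) (hν : nuR T I = I)
    (hproper : I ≠ (T : Set Q)) :
    (∃ u : Qˣ, (u : Q) ∈ I ∧ I = uSet (u : Q) (T : Set Q)) ∨
    (IsRightModSet S I ∧ nuR S I = I) ∨
    (∃ u : Qˣ, (u : Q) ∈ S ∧ I = uSet (u : Q) M ∧ nuR S M = (S : Set Q)) := by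
  have hMT : M ⊆ (T : Set Q) := hTloc.1.2.2
  have hMS : M ⊆ (S : Set Q) := hSloc.1.2.2
  have hIM : I ⊆ M := subset_M hTloc hI hIT (fun h1 => hproper (eq_coe_of_one_mem hI hIT h1))
  by_cases hA : ∃ l ∈ colonL (T : Set Q) I, ¬ ∀ i ∈ I, l * i ∈ M
  · obtain ⟨l, hl, hlM⟩ := hA
    exact Or.inl (principal_of_colon hTloc hI hl hlM)
  push_neg at hA
  have hIS : IsRightModSet S I := by
    refine ⟨hI.1, hI.2.1, hI.2.2.1, ?_⟩
    intro x hx s hs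
    rw [← hν]
    exact fun l hlmem => by
      rw [← mul_assoc]
      exact hMT (hSloc.1.1.2.2.2 (l * x) (hA l hlmem x hx) s hs)
  by_cases hA' : ∃ l ∈ colonL (S : Set Q) I, ¬ ∀ i ∈ I, l * i ∈ M
  · obtain ⟨l, hl, hlM⟩ := hA'
    obtain ⟨u, hu, huI⟩ := principal_of_colon hSloc hIS hl hlM
    refine Or.inr (Or.inl ⟨hIS, ?_⟩)
    rw [huI]
    exact nuR_principal S u
  push_neg at hA'
  have hLL : colonL (S : Set Q) I = colonL (T : Set Q) I := by
    apply subset_antisymm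
    · intro l hl
      exact fun i hi => hMT (hA' l hl i hi)
    · intro l hl
      exact fun i hi => hMS (hA l hl i hi)
  by_cases hC : nuR S I ⊆ I
  · exact Or.inr (Or.inl ⟨hIS, subset_antisymm hC (subset_nuR S I)⟩)
  obtain ⟨q, hq, hqI⟩ := Set.not_subset.mp hC
  have hqS : q ∈ (S : Set Q) := by
    have h1 : (1 : Q) ∈ colonL (S : Set Q) I := fun i hi => by
      rw [one_mul]; exact hMS (hIM hi)
    simpa using hq 1 h1
  obtain ⟨l, hlmem, hlq⟩ : ∃ l ∈ colonL (T : Set Q) I, l * q ∉ (T : Set Q) := by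
    by_contra hcon
    push_neg at hcon
    exact hqI (by rw [← hν]; exact fun l hl => hcon l hl)
  have hlS : l ∈ colonL (S : Set Q) I := by rw [hLL]; exact hlmem
  have hlqS : l * q ∈ (S : Set Q) := hq l hlS
  have hlqM : l * q ∉ M := fun h => hlq (hMT h)
  obtain ⟨_, w, hwS, hw1, hw2⟩ := isUnitIn_of_not_mem hSloc hlqS hlqM
  have hl''q : (w * l) * q = 1 := by rw [mul_assoc]; exact hw2
  have hq1 : q * (w * l) = 1 := artinian_mul_eq_one_comm hl''q
  have hwl_colon : ∀ i ∈ I, (w * l) * i ∈ M := fun i hi => by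
    rw [mul_assoc]
    exact hSloc.1.2.1.2.2.2 (l * i) (hA l hlmem i hi) w hwS
  have hIsub : I ⊆ uSet q M := fun i hi =>
    ⟨(w * l) * i, hwl_colon i hi, by rw [← mul_assoc, hq1, one_mul]⟩
  have hsubI : uSet q M ⊆ I := by
    rintro _ ⟨m, hm, rfl⟩
    rw [← hν]
    exact fun l₂ hl₂ => by
      have hl₂S : l₂ ∈ colonL (S : Set Q) I := by rw [hLL]; exact hl₂
      have h5 : l₂ * q ∈ (S : Set Q) := hq l₂ hl₂S
      have h6 : (l₂ * q) * m ∈ M := hSloc.1.2.1.2.2.2 m hm (l₂ * q) h5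
      rw [← mul_assoc]
      exact hMT h6
  have hIu : I = uSet q M := subset_antisymm hIsub hsubI
  rcases rightMod_dichotomy hSloc (N := nuR S M)
      (colonR_isRightMod S (colonL (S : Set Q) M)) (nuR_subset S hMS) with hd | hd
  · exfalso
    have h4 : nuR S M = M := subset_antisymm hd (subset_nuR S M)
    have h7 : nuR S (uSet q M) = uSet q (nuR S M) := nuR_uSet S ⟨q, w * l, hq1, hl''q⟩ M
    have hq' : q ∈ nuR S (uSet q M) := by rw [← hIu]; exact hq
    rw [h7, h4] at hq'
    exact hqI (by rw [hIu]; exact hq')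
  · exact Or.inr (Or.inr ⟨⟨q, w * l, hq1, hl''q⟩, hqS, hIu, hd⟩)

theorem classifyS (hSloc : IsLocalWithMax S M) (hTloc : IsLocalWithMax T M)
    (hsub : (T : Set Q) ⊆ (S : Set Q)) {I : Set Q}
    (hI : IsRightModSet S I) (hIS' : I ⊆ (S : Set Q)) (hν : nuR S I = I)
    (hproper : I ≠ (S : Set Q)) :
    (∃ u : Qˣ, (u : Q) ∈ I ∧ I = uSet (u : Q) (S : Set Q)) ∨ nuR T I = I := by
  have hMT : M ⊆ (T : Set Q) := hTloc.1.2.2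
  by_cases hA : ∃ l ∈ colonL (S : Set Q) I, ¬ ∀ i ∈ I, l * i ∈ M
  · obtain ⟨l, hl, hlM⟩ := hA
    exact Or.inl (principal_of_colon hSloc hI hl hlM)
  push_neg at hA
  right
  apply subset_antisymm
  · intro q hq
    rw [← hν]
    exact fun l hl => hsub (hq l (fun i hi => hMT (hA l hl i hi)))
  · exact subset_nuR T I

end HalimiAux

end HalimiMain

section HalimiAcc

namespace HalimiAux

variable {Q : Type*} [Ring Q] [IsArtinianRing Q]
variable {T S : Subring Q} {M : Set Q}

theorem accT_of_accS (hTo : IsOrderIn T) (hSo : IsOrderIn S)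
    (hTloc : IsLocalWithMax T M) (hSloc : IsLocalWithMax S M)
    (hsub : (T : Set Q) ⊆ (S : Set Q)) (hne : ¬ (S : Set Q) ⊆ (T : Set Q))
    (hacc : ACCRightDivisorial S) : ACCRightDivisorial T := by
  intro f hf hchain
  have hmono : Monotone f := monotone_nat_of_le_succ hchain
  have hMT : M ⊆ (T : Set Q) := hTloc.1.2.2
  have hMS : M ⊆ (S : Set Q) := hSloc.1.2.2
  by_cases htop : ∃ n₀, f n₀ = (T : Set Q)
  · obtain ⟨n₀, hn₀⟩ := htop
    refine ⟨n₀, fun n hn => ?_⟩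
    rw [hn₀]
    exact subset_antisymm (hf n).1.2 (by rw [← hn₀]; exact hmono hn)
  push_neg at htop
  have hprop : ∀ n, f n ⊆ M := fun n =>
    subset_M hTloc (hf n).1.1 (hf n).1.2
      (fun h1 => htop n (eq_coe_of_one_mem (hf n).1.1 (hf n).1.2 h1))
  have hclass : ∀ n,
      (∃ u : Qˣ, (u : Q) ∈ f n ∧ f n = uSet (u : Q) (T : Set Q)) ∨
      (IsRightModSet S (f n) ∧ nuR S (f n) = f n) ∨
      (∃ u : Qˣ, (u : Q) ∈ S ∧ f n = uSet (u : Q) M ∧ nuR S M = (S : Set Q)) :=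
    fun n => classifyT hTloc hSloc hsub (hf n).1.1 (hf n).1.2 (hf n).2.2 (htop n)
  have hJa : ∀ (n : ℕ) (u : Qˣ), f n = uSet (u : Q) (T : Set Q) →
      nuR S (rightSpan S (f n)) = uSet (u : Q) (S : Set Q) := by
    intro n u hu
    have hspan : rightSpan S (f n) = uSet (u : Q) (S : Set Q) := by
      apply subset_antisymm
      · refine rightSpan_subset S (uSet_isRightMod S _ (coe_isRightMod S)) ?_
        rw [hu]
        rintro _ ⟨t, ht, rfl⟩
        exact ⟨t, hsub ht, rfl⟩
      · rintro _ ⟨s, hs, rfl⟩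
        have humem : (u : Q) ∈ rightSpan S (f n) :=
          subset_rightSpan S _ (by rw [hu]; exact ⟨1, T.one_mem, (mul_one _).symm⟩)
        exact (rightSpan_isRightMod S (f n)).2.2.2 _ humem s hs
    rw [hspan, nuR_principal]
  have hJb : ∀ n : ℕ, IsRightModSet S (f n) → nuR S (f n) = f n →
      nuR S (rightSpan S (f n)) = f n := by
    intro n h1 h2
    rw [rightSpan_eq_self S h1, h2]
  have hJc : ∀ (n : ℕ) (u : Qˣ), f n = uSet (u : Q) M → nuR S M = (S : Set Q) →
      nuR S (rightSpan S (f n)) = uSet (u : Q) (S : Set Q) := by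
    intro n u hu hM
    rw [hu, rightSpan_eq_self S (uSet_isRightMod S _ hSloc.1.1), nuR_uSet, hM]
  have hgprops : ∀ n, IsRightIdealSet S (nuR S (rightSpan S (f n))) ∧
      (∃ a ∈ nuR S (rightSpan S (f n)), IsRegularElemIn S a) ∧
      nuR S (nuR S (rightSpan S (f n))) = nuR S (rightSpan S (f n)) := by
    intro n
    rcases hclass n with ⟨u, huI, hu⟩ | ⟨h1, h2⟩ | ⟨u, huS, hu, hM⟩
    · have hg := hJa n u hu
      have huM : (u : Q) ∈ M := hprop n huI
      rw [hg]
      refine ⟨⟨uSet_isRightMod S _ (coe_isRightMod S), ?_⟩,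
        ⟨(u : Q), ⟨1, S.one_mem, (mul_one _).symm⟩, regular_of_unit S (hMS huM) u.isUnit⟩,
        nuR_principal S u⟩
      rintro _ ⟨s, hs, rfl⟩
      exact hMS (hSloc.1.1.2.2.2 _ huM s hs)
    · have hg := hJb n h1 h2
      rw [hg]
      obtain ⟨a, haI, hareg⟩ := (hf n).2.1
      exact ⟨⟨h1, (hprop n).trans hMS⟩,
        ⟨a, haI, regular_of_unit S (hsub hareg.1) (isUnit_of_regular hTo hareg)⟩, h2⟩
    · have hg := hJc n u hu hM
      rw [hg]
      refine ⟨⟨uSet_isRightMod S _ (coe_isRightMod S), ?_⟩,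
        ⟨(u : Q), ⟨1, S.one_mem, (mul_one _).symm⟩, regular_of_unit S huS u.isUnit⟩,
        nuR_principal S u⟩
      rintro _ ⟨s, hs, rfl⟩
      exact S.mul_mem huS hs
  have hgchain : ∀ n, nuR S (rightSpan S (f n)) ⊆ nuR S (rightSpan S (f (n + 1))) :=
    fun n => nuR_mono S (rightSpan_mono S (hchain n))
  obtain ⟨N, hN⟩ := hacc _ hgprops hgchain
  have keyA : ∀ m n, N ≤ m → m ≤ n →
      (∃ u : Qˣ, (u : Q) ∈ f m ∧ f m = uSet (u : Q) (T : Set Q)) →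
      (∃ u : Qˣ, (u : Q) ∈ f n ∧ f n = uSet (u : Q) (T : Set Q)) → f m = f n := by
    rintro m n hm hmn ⟨um, humI, hum⟩ ⟨un, hunI, hun⟩
    have hgeq : uSet (um : Q) (S : Set Q) = uSet (un : Q) (S : Set Q) := by
      rw [← hJa m um hum, ← hJa n un hun, hN m hm, hN n (hm.trans hmn)]
    obtain ⟨t, htT, heq⟩ : ∃ t ∈ (T : Set Q), (um : Q) = (un : Q) * t := by
      have := hmono hmn humI
      rw [hun] at this
      exact this
    obtain ⟨s, hsS, heq2⟩ : ∃ s ∈ (S : Set Q), (un : Q) = (um : Q) * s := by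
      have h8 : (un : Q) ∈ uSet (um : Q) (S : Set Q) := by
        rw [hgeq]; exact ⟨1, S.one_mem, (mul_one _).symm⟩
      exact h8
    have hst : s * t = 1 :=
      (Units.mul_right_inj um).mp (by rw [mul_one, ← mul_assoc, ← heq2, ← heq])
    have hts : t * s = 1 :=
      (Units.mul_right_inj un).mp (by rw [mul_one, ← mul_assoc, ← heq, ← heq2])
    have htM : t ∉ M := not_mem_M_of_unit hSloc ⟨hsub htT, s, hsS, hts, hst⟩
    obtain ⟨_, t', ht'T, htt', ht't⟩ := isUnitIn_of_not_mem hTloc htT htM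
    have hst' : s = t' := by rw [← one_mul t', ← hst, mul_assoc, htt', mul_one]
    rw [hum, hun]
    apply subset_antisymm
    · rintro _ ⟨τ, hτ, rfl⟩
      exact ⟨t * τ, T.mul_mem htT hτ, by rw [← mul_assoc, ← heq]⟩
    · rintro _ ⟨τ, hτ, rfl⟩
      exact ⟨t' * τ, T.mul_mem ht'T hτ, by rw [← mul_assoc, ← hst', ← heq2]⟩
  have keyB : ∀ m n, N ≤ m → m ≤ n →
      (IsRightModSet S (f m) ∧ nuR S (f m) = f m) →
      (IsRightModSet S (f n) ∧ nuR S (f n) = f n) → f m = f n := by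
    rintro m n hm hmn ⟨hm1, hm2⟩ ⟨hn1, hn2⟩
    calc f m = nuR S (rightSpan S (f m)) := (hJb m hm1 hm2).symm
    _ = nuR S (rightSpan S (f n)) := by rw [hN m hm, hN n (hm.trans hmn)]
    _ = f n := hJb n hn1 hn2
  have keyC : ∀ m n, N ≤ m → m ≤ n →
      (∃ u : Qˣ, (u : Q) ∈ S ∧ f m = uSet (u : Q) M ∧ nuR S M = (S : Set Q)) →
      (∃ u : Qˣ, (u : Q) ∈ S ∧ f n = uSet (u : Q) M ∧ nuR S M = (S : Set Q)) →
      f m = f n := by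
    rintro m n hm hmn ⟨um, humS, hum, hM⟩ ⟨un, hunS, hun, _⟩
    have hgeq : uSet (um : Q) (S : Set Q) = uSet (un : Q) (S : Set Q) := by
      rw [← hJc m um hum hM, ← hJc n un hun hM, hN m hm, hN n (hm.trans hmn)]
    obtain ⟨s, hsS, heq⟩ : ∃ s ∈ (S : Set Q), (un : Q) = (um : Q) * s := by
      have h8 : (un : Q) ∈ uSet (um : Q) (S : Set Q) := by
        rw [hgeq]; exact ⟨1, S.one_mem, (mul_one _).symm⟩
      exact h8
    obtain ⟨s', hs'S, heq'⟩ : ∃ s' ∈ (S : Set Q), (um : Q) = (un : Q) * s' := by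
      have h8 : (um : Q) ∈ uSet (un : Q) (S : Set Q) := by
        rw [← hgeq]; exact ⟨1, S.one_mem, (mul_one _).symm⟩
      exact h8
    rw [hum, hun]
    apply subset_antisymm
    · rintro _ ⟨μ, hμ, rfl⟩
      exact ⟨s' * μ, hSloc.1.2.1.2.2.2 μ hμ s' hs'S, by rw [← mul_assoc, ← heq']⟩
    · rintro _ ⟨μ, hμ, rfl⟩
      exact ⟨s * μ, hSloc.1.2.1.2.2.2 μ hμ s hsS, by rw [← mul_assoc, ← heq]⟩
  refine stabilize hchain (N := N) ?_
  have hVa : {A : Set Q | ∃ n, N ≤ n ∧ f n = A ∧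
      ∃ u : Qˣ, (u : Q) ∈ f n ∧ f n = uSet (u : Q) (T : Set Q)}.Subsingleton := by
    rintro A ⟨m, hm, rfl, hA⟩ B ⟨n, hn, rfl, hB⟩
    rcases le_total m n with h | h
    · exact keyA m n hm h hA hB
    · exact (keyA n m hn h hB hA).symm
  have hVb : {A : Set Q | ∃ n, N ≤ n ∧ f n = A ∧
      IsRightModSet S (f n) ∧ nuR S (f n) = f n}.Subsingleton := by
    rintro A ⟨m, hm, rfl, hA⟩ B ⟨n, hn, rfl, hB⟩
    rcases le_total m n with h | h
    · exact keyB m n hm h hA hB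
    · exact (keyB n m hn h hB hA).symm
  have hVc : {A : Set Q | ∃ n, N ≤ n ∧ f n = A ∧
      ∃ u : Qˣ, (u : Q) ∈ S ∧ f n = uSet (u : Q) M ∧ nuR S M = (S : Set Q)}.Subsingleton := by
    rintro A ⟨m, hm, rfl, hA⟩ B ⟨n, hn, rfl, hB⟩
    rcases le_total m n with h | h
    · exact keyC m n hm h hA hB
    · exact (keyC n m hn h hB hA).symm
  refine Set.Finite.subset ((hVa.finite.union hVb.finite).union hVc.finite) ?_
  rintro A ⟨n, hn, rfl⟩
  rcases hclass n with h | h | h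
  · exact Or.inl (Or.inl ⟨n, hn, rfl, h⟩)
  · exact Or.inl (Or.inr ⟨n, hn, rfl, h⟩)
  · exact Or.inr ⟨n, hn, rfl, h⟩

theorem accS_of_accT (hTo : IsOrderIn T) (hSo : IsOrderIn S)
    (hTloc : IsLocalWithMax T M) (hSloc : IsLocalWithMax S M)
    (hsub : (T : Set Q) ⊆ (S : Set Q)) (hne : ¬ (S : Set Q) ⊆ (T : Set Q))
    (hacc : ACCRightDivisorial T) : ACCRightDivisorial S := by
  intro f hf hchain
  have hmono : Monotone f := monotone_nat_of_le_succ hchain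
  have hMT : M ⊆ (T : Set Q) := hTloc.1.2.2
  have hMS : M ⊆ (S : Set Q) := hSloc.1.2.2
  by_cases htop : ∃ n₀, f n₀ = (S : Set Q)
  · obtain ⟨n₀, hn₀⟩ := htop
    refine ⟨n₀, fun n hn => ?_⟩
    rw [hn₀]
    exact subset_antisymm (hf n).1.2 (by rw [← hn₀]; exact hmono hn)
  push_neg at htop
  have hprop : ∀ n, f n ⊆ M := fun n =>
    subset_M hSloc (hf n).1.1 (hf n).1.2
      (fun h1 => htop n (eq_coe_of_one_mem (hf n).1.1 (hf n).1.2 h1))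
  have hclass : ∀ n,
      (∃ u : Qˣ, (u : Q) ∈ f n ∧ f n = uSet (u : Q) (S : Set Q)) ∨ nuR T (f n) = f n :=
    fun n => classifyS hSloc hTloc hsub (hf n).1.1 (hf n).1.2 (hf n).2.2 (htop n)
  have hcolonTS : colonL (T : Set Q) (S : Set Q) = M := colonL_coe_ST hTloc hSloc hne
  have hKp : ∀ u : Qˣ,
      nuR T (uSet (u : Q) (S : Set Q)) = uSet (u : Q) (colonR (T : Set Q) M) := by
    intro u
    unfold nuR
    rw [colonL_uSet, hcolonTS, colonR_comp]
  have hgprops : ∀ n, IsRightIdealSet T (nuR T (f n)) ∧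
      (∃ a ∈ nuR T (f n), IsRegularElemIn T a) ∧
      nuR T (nuR T (f n)) = nuR T (f n) := by
    intro n
    obtain ⟨a, haI, hareg⟩ := (hf n).2.1
    exact ⟨⟨colonR_isRightMod T _, nuR_subset T ((hprop n).trans hMT)⟩,
      ⟨a, subset_nuR T (f n) haI,
        regular_of_unit T (hMT (hprop n haI)) (isUnit_of_regular hSo hareg)⟩,
      nuR_idem T (f n)⟩
  have hgchain : ∀ n, nuR T (f n) ⊆ nuR T (f (n + 1)) := fun n => nuR_mono T (hchain n)
  obtain ⟨N, hN⟩ := hacc _ hgprops hgchain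
  have keyP : ∀ m n, N ≤ m → m ≤ n →
      (∃ u : Qˣ, (u : Q) ∈ f m ∧ f m = uSet (u : Q) (S : Set Q)) →
      (∃ u : Qˣ, (u : Q) ∈ f n ∧ f n = uSet (u : Q) (S : Set Q)) → f m = f n := by
    rintro m n hm hmn ⟨um, humI, hum⟩ ⟨un, hunI, hun⟩
    have hgeq : uSet (um : Q) (colonR (T : Set Q) M)
        = uSet (un : Q) (colonR (T : Set Q) M) := by
      rw [← hKp um, ← hKp un, ← hum, ← hun, hN m hm, hN n (hm.trans hmn)]
    have h1D : (1 : Q) ∈ colonR (T : Set Q) M := fun b hb => by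
      rw [mul_one]; exact hMT hb
    obtain ⟨d, hdD, heqd⟩ : ∃ d ∈ colonR (T : Set Q) M, (un : Q) = (um : Q) * d := by
      have h8 : (un : Q) ∈ uSet (um : Q) (colonR (T : Set Q) M) := by
        rw [hgeq]; exact ⟨1, h1D, (mul_one _).symm⟩
      exact h8
    obtain ⟨s₀, hs₀S, heqs⟩ : ∃ s₀ ∈ (S : Set Q), (um : Q) = (un : Q) * s₀ := by
      have := hmono hmn humI
      rw [hun] at this
      exact this
    have hsd : s₀ * d = 1 :=
      (Units.mul_right_inj un).mp (by rw [mul_one, ← mul_assoc, ← heqs, ← heqd])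
    have hds : d * s₀ = 1 :=
      (Units.mul_right_inj um).mp (by rw [mul_one, ← mul_assoc, ← heqd, ← heqs])
    have hs₀M : s₀ ∉ M := by
      intro hs₀M
      apply hne
      intro s hs
      have h2 : s * s₀ ∈ M := hSloc.1.2.1.2.2.2 s₀ hs₀M s hs
      have h3 : (s * s₀) * d ∈ (T : Set Q) := hdD (s * s₀) h2
      rwa [mul_assoc, hsd, mul_one] at h3
    obtain ⟨_, t₀, ht₀S, h1, h2⟩ := isUnitIn_of_not_mem hSloc hs₀S hs₀M
    have ht₀d : t₀ = d := by rw [← one_mul t₀, ← hds, mul_assoc, h1, mul_one]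
    have hdS : d ∈ (S : Set Q) := ht₀d ▸ ht₀S
    rw [hum, hun]
    apply subset_antisymm
    · rintro _ ⟨σ, hσ, rfl⟩
      exact ⟨s₀ * σ, S.mul_mem hs₀S hσ, by rw [← mul_assoc, ← heqs]⟩
    · rintro _ ⟨σ, hσ, rfl⟩
      exact ⟨d * σ, S.mul_mem hdS hσ, by rw [← mul_assoc, ← heqd]⟩
  have keyQ : ∀ m n, N ≤ m → m ≤ n → nuR T (f m) = f m → nuR T (f n) = f n →
      f m = f n := by
    intro m n hm hmn h1 h2
    calc f m = nuR T (f m) := h1.symm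
    _ = nuR T (f n) := by rw [hN m hm, hN n (hm.trans hmn)]
    _ = f n := h2
  refine stabilize hchain (N := N) ?_
  have hVp : {A : Set Q | ∃ n, N ≤ n ∧ f n = A ∧
      ∃ u : Qˣ, (u : Q) ∈ f n ∧ f n = uSet (u : Q) (S : Set Q)}.Subsingleton := by
    rintro A ⟨m, hm, rfl, hA⟩ B ⟨n, hn, rfl, hB⟩
    rcases le_total m n with h | h
    · exact keyP m n hm h hA hB
    · exact (keyP n m hn h hB hA).symm
  have hVq : {A : Set Q | ∃ n, N ≤ n ∧ f n = A ∧ nuR T (f n) = f n}.Subsingleton := by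
    rintro A ⟨m, hm, rfl, hA⟩ B ⟨n, hn, rfl, hB⟩
    rcases le_total m n with h | h
    · exact keyQ m n hm h hA hB
    · exact (keyQ n m hn h hB hA).symm
  refine Set.Finite.subset (hVp.finite.union hVq.finite) ?_
  rintro A ⟨n, hn, rfl⟩
  rcases hclass n with h | h
  · exact Or.inl ⟨n, hn, rfl, h⟩
  · exact Or.inr ⟨n, hn, rfl, h⟩

end HalimiAux

end HalimiAcc


/-- Theorem 3.5. Let `T ⊂ S` be local orders in a simple Artinian
ring `Q` with the same prime ideals. Then `T` is a right Mori order iff `S` is a right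
Mori order. -/
theorem rightMori_iff_of_samePrimes
    {Q : Type*} [Ring Q] [IsSimpleRing Q] [IsArtinianRing Q]
    (T S : Subring Q) (hT : IsLocalOrder T) (hS : IsLocalOrder S)
    (hTS : (T : Set Q) ⊂ (S : Set Q))
    (hprimes : ∀ P : Set Q, IsPrimeIdealSet T P ↔ IsPrimeIdealSet S P) :
    IsRightMori T ↔ IsRightMori S := by
  obtain ⟨hTo, MT, hTloc⟩ := hT
  obtain ⟨hSo, MS, hSloc⟩ := hS
  have hsub : (T : Set Q) ⊆ (S : Set Q) := hTS.1
  have hne : ¬ (S : Set Q) ⊆ (T : Set Q) := hTS.2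
  have hMT_prime : IsPrimeIdealSet S MT := (hprimes MT).1 (HalimiAux.prime_M hTloc)
  have hMS_prime : IsPrimeIdealSet T MS := (hprimes MS).2 (HalimiAux.prime_M hSloc)
  have hMT_sub : MT ⊆ MS := by
    rcases HalimiAux.rightMod_dichotomy hSloc hMT_prime.1.1 hMT_prime.1.2.2 with h | h
    · exact h
    · exact absurd h hMT_prime.2.1
  have hMS_sub : MS ⊆ MT := by
    rcases HalimiAux.rightMod_dichotomy hTloc hMS_prime.1.1 hMS_prime.1.2.2 with h | h
    · exact h
    · exact absurd h hMS_prime.2.1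
  have hMM : MS = MT := subset_antisymm hMS_sub hMT_sub
  rw [hMM] at hSloc
  constructor
  · intro h
    exact ⟨hSo, HalimiAux.accS_of_accT hTo hSo hTloc hSloc hsub hne h.2⟩
  · intro h
    exact ⟨hTo, HalimiAux.accT_of_accS hTo hSo hTloc hSloc hsub hne h.2⟩
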